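/- For integers k ≥ 1 and nonnegative integers n1,…,nk, the sum over all nonnegative integers t1,…,tk with t1 = tk = 0 of Π_{i=1}^{k−1} q^{t_{i+1}(n_{i+1} − t_i + t_{i+1})} · [n_i+t_i choose n_i]_q · [n_i+n_{i+1} choose n_i+t_i−t_{i+1}]_q equals the q-multinomial coefficient [n1+⋯+nk choose n1,…,nk]_q. -/

import Mathlib

open scoped BigOperators

namespace DyckTilings

/-- In the step word of a lattice path, `false` is a down step `(1,0)` and
`true` is an up step `(0,1)`.  `pathX w x0 c` is the x-coordinate of the point
of the path (started at a point with x-coordinate `x0` on the diagonal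
`x + y = 0`) lying on the diagonal `x + y = c`, i.e. the point reached after
`c` steps. -/
def pathX (w : List Bool) (x0 : ℤ) (c : ℤ) : ℤ :=
  x0 + ((w.take c.toNat).count false : ℤ)

/-- `w` is (the step word of) a Dyck path of length `2 * n`: a lattice path
from `(0,0)` to `(n,n)` never going below the line `y = x`. -/
def IsDyckWord (n : ℕ) (w : List Bool) : Prop :=
  w.length = 2 * n ∧ w.count false = n ∧
    ∀ c : ℤ, 0 ≤ c → c ≤ 2 * n → 2 * pathX w 0 c ≤ c

/-- the Dyck path `Δ_k`: `k` up steps followed by `k` down steps -/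
def delta (k : ℕ) : List Bool :=
  List.replicate k true ++ List.replicate k false

/-- `Δ_{N 0, N 1, …, N (k-1)} = Δ_{N 0} * ⋯ * Δ_{N (k-1)}` (concatenation of
Dyck paths is concatenation of their step words) -/
def deltaComp (N : ℕ → ℕ) (k : ℕ) : List Bool :=
  ((List.range k).map fun i => delta (N i)).flatten

/-- the q-integer `[m]_q = 1 + q + ⋯ + q^(m-1)` -/
def qint {K : Type*} [CommRing K] (q : K) (m : ℕ) : K :=
  ∑ i ∈ Finset.range m, q ^ i

/-- the q-factorial `[m]_q! = [1]_q [2]_q ⋯ [m]_q` -/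
def qfact {K : Type*} [CommRing K] (q : K) (m : ℕ) : K :=
  ∏ i ∈ Finset.range m, qint q (i + 1)

/-- the q-binomial coefficient `[m choose j]_q`, equal to `0` when `j < 0` or
`j > m` -/
noncomputable def qbinom {K : Type*} [Field K] (q : K) (m : ℕ) (j : ℤ) : K :=
  if 0 ≤ j ∧ j ≤ m then qfact q m / (qfact q j.toNat * qfact q (m - j.toNat)) else 0

/-- the height (value of `y - x`) of the point of the path `w` (started on the
main diagonal) lying on the diagonal `x + y = c` -/
def heightAt (w : List Bool) (c : ℕ) : ℤ :=
  (c : ℤ) - 2 * pathX w 0 (c : ℤ)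

/-- the indices of the up steps of `w`; each chord of `w` consists of an up
step and its matching down step, so chords are indexed by `upSteps w` -/
def upSteps (w : List Bool) : Finset ℕ :=
  (Finset.range w.length).filter fun i => w.getD i false = true

/-- the index of the down step matched with the up step at index `i` -/
noncomputable def matchIdx (w : List Bool) (i : ℕ) : ℕ :=
  sInf {j : ℕ | i < j ∧ heightAt w (j + 1) = heightAt w i}

/-- the length `|c|` of the chord of the up step at index `i`: the difference
of the x-coordinates of the starting point of the up step and the ending point
of the matching down step -/
noncomputable def chordLen (w : List Bool) (i : ℕ) : ℕ :=
  (pathX w 0 ((matchIdx w i : ℤ) + 1) - pathX w 0 (i : ℤ)).toNat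

/-- the height `ht(c)` of the chord of the up step at index `i`: the chord lies
between the lines `y = x + ht(c) - 1` and `y = x + ht(c)` -/
def chordHt (w : List Bool) (i : ℕ) : ℕ := (heightAt w (i + 1)).toNat

/-- `ht(μ) = Σ_{c ∈ C(μ)} (ht(c) - 1)` -/
def htSum (w : List Bool) : ℕ := ∑ i ∈ upSteps w, (chordHt w i - 1)

/-! ### Skew shapes and (full) cover-inclusive Dyck tilings -/

/-- The set of cells of the skew shape `lam/mu`, for Dyck paths `lam` and `mu`
with `mu` weakly above `lam`; the cell `(x,y)` is the unit square
`[x,x+1] × [y,y+1]`, and it belongs to `lam/mu` exactly when, on the diagonal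
`x + y + 1` through its center, `mu` passes weakly to its left and `lam`
weakly to its right. -/
def skewCells (lam mu : List Bool) : Set (ℤ × ℤ) :=
  {c | pathX mu 0 (c.1 + c.2 + 1) ≤ c.1 ∧ c.1 + 1 ≤ pathX lam 0 (c.1 + c.2 + 1)}

/-- the number of cells `|λ/μ|` of the skew shape -/
noncomputable def ncells (lam mu : List Bool) : ℕ := (skewCells lam mu).ncard

/-- the cells of a ribbon starting at the cell `p`, with `true` = north step
and `false` = east step -/
def cellsOf : List Bool → ℤ × ℤ → List (ℤ × ℤ)
  | [], p => [p]
  | s :: rest, p => p :: cellsOf rest (if s then (p.1, p.2 + 1) else (p.1 + 1, p.2))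

/-- A Dyck tile: a ribbon whose sequence of cells, read from southwest to
northeast, follows a Dyck word (equivalently, the centers of its cells form a
Dyck path). -/
def IsDyckTile (s : Set (ℤ × ℤ)) : Prop :=
  ∃ (x0 y0 : ℤ) (k : ℕ) (u : List Bool), IsDyckWord k u ∧
    s = {c | c ∈ cellsOf u (x0, y0)}

/-- southeast translation by `(k, -k)` -/
def shiftSE (k : ℤ) (s : Set (ℤ × ℤ)) : Set (ℤ × ℤ) :=
  (fun c => (c.1 + k, c.2 - k)) '' s

/-- cover-inclusiveness: if a tile `η₁` has a cell to the southeast of a cell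
of a tile `η₂`, then that southeast translation of `η₂` is contained in `η₁` -/
def IsCoverInclusive (T : Set (Set (ℤ × ℤ))) : Prop :=
  ∀ η₁ ∈ T, ∀ η₂ ∈ T, ∀ c ∈ η₂, ∀ k : ℤ, 1 ≤ k →
    (c.1 + k, c.2 - k) ∈ η₁ → shiftSE k η₂ ⊆ η₁

/-- `T` is a cover-inclusive Dyck tiling of the skew shape `lam/mu` (in
particular `mu` lies weakly above `lam`, so that `lam/mu` is defined). -/
def IsDyckTiling (lam mu : List Bool) (T : Set (Set (ℤ × ℤ))) : Prop :=
  (∀ c : ℤ, pathX mu 0 c ≤ pathX lam 0 c) ∧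
  (∀ η ∈ T, IsDyckTile η) ∧
  T.PairwiseDisjoint id ∧
  (⋃ η ∈ T, η) = skewCells lam mu ∧
  IsCoverInclusive T

/-- the number of tiles `|T|` of a tiling -/
noncomputable def ntiles (T : Set (Set (ℤ × ℤ))) : ℕ := T.ncard

/-- the half-length of a Dyck tile (a Dyck tile of length `2k` has `2k+1`
cells) -/
noncomputable def halfLen (s : Set (ℤ × ℤ)) : ℕ := s.ncard / 2

/-- `‖T‖`: the sum of the half-lengths of the tiles of `T` -/
noncomputable def normT (T : Set (Set (ℤ × ℤ))) : ℕ := ∑ᶠ η ∈ T, halfLen η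

/-! ### Triangles, regions `λ/μ`, and truncated Dyck tilings

The unit cell `(x,y)` is cut by its diagonal of slope `-1` into a southwest
half-cell, the triangle `(x, y, false)`, and a northeast half-cell, the
triangle `(x, y, true)`. -/

/-- Membership of a triangle in the region `lam/mu`, where `lam` is a Dyck
path of semilength `n` from `(0,0)` to `(n,n)` and `mu` is a lattice path
starting at `(-a, a)` lying weakly above `lam`; the region is bounded by
`lam`, `mu` and the two segments of slope `-1` joining `(0,0)` to `(-a,a)` and
`(n,n)` to the endpoint of `mu`. -/
def TriInRegion (n : ℕ) (lam mu : List Bool) (a : ℤ) (t : ℤ × ℤ × Bool) : Prop :=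
  pathX mu (-a) (t.1 + t.2.1 + 1) ≤ t.1 ∧
  t.1 + 1 ≤ pathX lam 0 (t.1 + t.2.1 + 1) ∧
  (if t.2.2 then 0 ≤ t.1 + t.2.1 + 1 ∧ t.1 + t.2.1 + 2 ≤ 2 * (n : ℤ)
   else 0 ≤ t.1 + t.2.1 ∧ t.1 + t.2.1 + 1 ≤ 2 * (n : ℤ))

/-- `L(λ; a, b)`: the lattice paths of up and down steps from `(-a, a)` to
`(n-b, n+b)` that never go below `lam` -/
def LSet (n : ℕ) (lam : List Bool) (a b : ℤ) : Set (List Bool) :=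
  {w | w.length = 2 * n ∧ (w.count false : ℤ) = (n : ℤ) - b + a ∧
    ∀ c : ℤ, 0 ≤ c → c ≤ 2 * n → pathX w (-a) c ≤ pathX lam 0 c}

/-- twice the area `|λ/μ|` of the region `lam/mu` (i.e. the number of
triangles contained in it) -/
def area2 (n : ℕ) (lam mu : List Bool) (a : ℤ) : ℤ :=
  ∑ d ∈ Finset.range (2 * n),
    (pathX lam 0 (d : ℤ) - pathX mu (-a) (d : ℤ) +
      (pathX lam 0 ((d : ℤ) + 1) - pathX mu (-a) ((d : ℤ) + 1)))

/-- the last (northeast) cell of a ribbon with start cell `(x0, y0)` and step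
word `u` -/
def lastCell (x0 y0 : ℤ) (u : List Bool) : ℤ × ℤ :=
  (x0 + u.count false, y0 + u.count true)

/-- A truncated Dyck tile: a Dyck tile of positive length with the southwest
half-cell of its southwest cell and the northeast half-cell of its northeast
cell cut off. -/
def IsTruncTile (s : Set (ℤ × ℤ × Bool)) : Prop :=
  ∃ (x0 y0 : ℤ) (k : ℕ) (u : List Bool), 0 < k ∧ IsDyckWord k u ∧
    s = {t : ℤ × ℤ × Bool | (t.1, t.2.1) ∈ cellsOf u (x0, y0)} \
        {(x0, y0, false), ((lastCell x0 y0 u).1, (lastCell x0 y0 u).2, true)}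

/-- southeast translation of a set of triangles by `(1, -1)` -/
def shiftTriSE (s : Set (ℤ × ℤ × Bool)) : Set (ℤ × ℤ × Bool) :=
  (fun t => (t.1 + 1, t.2.1 - 1, t.2.2)) '' s

/-- `T` is a cover-inclusive truncated Dyck tiling of (a subregion of) the
region `lam/mu`: the tiles are disjoint truncated Dyck tiles inside the
region, every tile whose southeast translate by `(1,-1)` meets the region has
this translate contained in a tile of `T`, and no two tiles share a border of
slope `-1`. -/
def IsTruncTiling (n : ℕ) (lam mu : List Bool) (a : ℤ)
    (T : Set (Set (ℤ × ℤ × Bool))) : Prop :=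
  (∀ η ∈ T, IsTruncTile η) ∧
  T.PairwiseDisjoint id ∧
  (∀ η ∈ T, ∀ t ∈ η, TriInRegion n lam mu a t) ∧
  (∀ η ∈ T, (∃ t ∈ shiftTriSE η, TriInRegion n lam mu a t) →
      ∃ η' ∈ T, shiftTriSE η ⊆ η') ∧
  (∀ η₁ ∈ T, ∀ η₂ ∈ T, η₁ ≠ η₂ →
      ∀ x y : ℤ, ¬((x, y, false) ∈ η₁ ∧ (x, y, true) ∈ η₂))

/-- the half-length of a truncated Dyck tile (a truncated Dyck tile of
half-length `k` consists of `4k` triangles) -/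
noncomputable def halfLenT (s : Set (ℤ × ℤ × Bool)) : ℕ := s.ncard / 4

/-- `‖T‖` for truncated tilings: the sum of the half-lengths of the tiles -/
noncomputable def normTT (T : Set (Set (ℤ × ℤ × Bool))) : ℕ := ∑ᶠ η ∈ T, halfLenT η

/-- `B_q(λ; a, b) = Σ_{μ ∈ L(λ;a,b)} Σ_{T ∈ TD(λ/μ)} q^{|λ/μ| - ‖T‖}`, a
polynomial in `q^{1/2}`, expressed in the variable `v = q^{1/2}` (so `q = v²`
and `q^{|λ/μ| - ‖T‖} = v^{2|λ/μ| - 2‖T‖}`). -/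
noncomputable def B (v : RatFunc ℚ) (n : ℕ) (lam : List Bool) (a b : ℤ) : RatFunc ℚ :=
  ∑ᶠ mu ∈ LSet n lam a b, ∑ᶠ T ∈ {T | IsTruncTiling n lam mu a T},
    v ^ (area2 n lam mu a - 2 * (normTT T : ℤ))

/-! ### Hermite histories and matchings -/

/-- A Hermite history on the Dyck path `mu` of length `2n`: a labeling of the
down steps of `mu` such that a down step of height `h` gets a label in
`{0, 1, …, h-1}` (encoded as a function on `ℕ` vanishing off the down steps). -/
def HHSet (n : ℕ) (mu : List Bool) : Set (ℕ → ℕ) :=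
  {σ | (∀ j, j < 2 * n → mu.getD j true = false → σ j < (heightAt mu j).toNat) ∧
       ∀ j, ¬(j < 2 * n ∧ mu.getD j true = false) → σ j = 0}

/-- `‖H‖`: the sum of the labels of a Hermite history -/
def normH (n : ℕ) (σ : ℕ → ℕ) : ℕ := ∑ j ∈ Finset.range (2 * n), σ j

/-- a complete matching on `{0, 1, …, 2n-1}` -/
def IsMatching (n : ℕ) (π : Set (ℕ × ℕ)) : Prop :=
  (∀ p ∈ π, p.1 < p.2 ∧ p.2 < 2 * n) ∧
  ∀ m, m < 2 * n → ∃! p, p ∈ π ∧ (p.1 = m ∨ p.2 = m)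

/-- `M(μ)`: the complete matchings whose shape is the Dyck path `mu` (the
`i`-th step of `mu` is an up step iff `i` is the smaller element of its pair) -/
def MSet (n : ℕ) (mu : List Bool) : Set (Set (ℕ × ℕ)) :=
  {π | IsMatching n π ∧ ∀ i, i < 2 * n → (mu.getD i false = true ↔ ∃ p ∈ π, p.1 = i)}

/-- the number of crossings of a matching -/
noncomputable def cro (π : Set (ℕ × ℕ)) : ℕ :=
  {pq : (ℕ × ℕ) × (ℕ × ℕ) | pq.1 ∈ π ∧ pq.2 ∈ π ∧
    pq.1.1 < pq.2.1 ∧ pq.2.1 < pq.1.2 ∧ pq.1.2 < pq.2.2}.ncard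

/-- the number of nestings of a matching -/
noncomputable def nest (π : Set (ℕ × ℕ)) : ℕ :=
  {pq : (ℕ × ℕ) × (ℕ × ℕ) | pq.1 ∈ π ∧ pq.2 ∈ π ∧
    pq.1.1 < pq.2.1 ∧ pq.2.2 < pq.1.2}.ncard

/-- `D(*/μ)`: cover-inclusive Dyck tilings of `λ/μ` over all Dyck paths `λ`
of length `2n` (for fixed `mu`, a tiling determines `lam`) -/
def DstarSet (n : ℕ) (mu : List Bool) : Set (Set (Set (ℤ × ℤ))) :=
  {T | ∃ lam, IsDyckWord n lam ∧ IsDyckTiling lam mu T}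

/-- `D(2n)`: the disjoint union of the sets `D(ν/ρ)` over all pairs of Dyck
paths `ν, ρ` of length `2n`, realized as the set of triples `(ν, ρ, T)` -/
def DDSet (n : ℕ) : Set (List Bool × List Bool × Set (Set (ℤ × ℤ))) :=
  {x | IsDyckWord n x.1 ∧ IsDyckWord n x.2.1 ∧ IsDyckTiling x.1 x.2.1 x.2.2}

noncomputable abbrev Q : RatFunc ℚ := RatFunc.X

lemma qint_X_eq (n : ℕ) :
    qint Q n = algebraMap (Polynomial ℚ) (RatFunc ℚ) (∑ i ∈ Finset.range n, Polynomial.X ^ i) := by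
  simp [qint, map_sum, map_pow, RatFunc.algebraMap_X]

lemma qint_ne_zero {n : ℕ} (hn : 0 < n) : qint Q n ≠ 0 := by
  rw [qint_X_eq, Ne, map_eq_zero_iff _ (RatFunc.algebraMap_injective ℚ)]
  intro h
  have := congrArg (Polynomial.eval (1 : ℚ)) h
  simp [Polynomial.eval_finset_sum] at this
  omega

lemma qfact_ne_zero (m : ℕ) : qfact Q m ≠ 0 := by
  rw [qfact]
  exact Finset.prod_ne_zero_iff.2 fun i _ => qint_ne_zero (Nat.succ_pos i)

lemma qX_ne_zero : Q ≠ 0 := RatFunc.X_ne_zero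

lemma qint_add (a b : ℕ) : qint Q (a + b) = qint Q a + Q ^ a * qint Q b := by
  rw [qint, Finset.sum_range_add]
  simp [qint, pow_add, Finset.mul_sum]

lemma qfact_succ (m : ℕ) : qfact Q (m + 1) = qfact Q m * qint Q (m + 1) :=
  Finset.prod_range_succ _ _

lemma qbinom_eq (m j : ℕ) (h : j ≤ m) :
    qbinom Q m (j : ℤ) = qfact Q m / (qfact Q j * qfact Q (m - j)) := by
  rw [qbinom, if_pos ⟨Int.ofNat_nonneg j, by exact_mod_cast h⟩, Int.toNat_natCast]

lemma qbinom_neg {m : ℕ} {j : ℤ} (h : j < 0) : qbinom Q m j = 0 := by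
  rw [qbinom, if_neg]; omega

lemma qbinom_gt {m : ℕ} {j : ℤ} (h : (m : ℤ) < j) : qbinom Q m j = 0 := by
  rw [qbinom, if_neg]; omega

lemma qbinom_self (m : ℕ) : qbinom Q m (m : ℤ) = 1 := by
  rw [qbinom_eq m m le_rfl, Nat.sub_self]
  have h0 : qfact Q 0 = 1 := by simp [qfact]
  rw [h0, mul_one, div_self (qfact_ne_zero m)]

lemma qbinom_zero (m : ℕ) : qbinom Q m 0 = 1 := by
  have := qbinom_eq m 0 (Nat.zero_le m)
  rw [Nat.cast_zero] at this
  rw [this, Nat.sub_zero]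
  have h0 : qfact Q 0 = 1 := by simp [qfact]
  rw [h0, one_mul, div_self (qfact_ne_zero m)]


lemma qpascal (m : ℕ) (j : ℤ) :
    qbinom Q (m + 1) j = qbinom Q m j + Q ^ ((m : ℤ) + 1 - j) * qbinom Q m (j - 1) := by
  rcases lt_or_ge j 0 with h | h
  · rw [qbinom_neg h, qbinom_neg h, qbinom_neg (show j - 1 < 0 by omega), mul_zero, add_zero]
  lift j to ℕ using h with jn
  rcases Nat.eq_zero_or_pos jn with rfl | hj1
  · simp only [Nat.cast_zero, qbinom_zero]
    rw [qbinom_neg (by norm_num : (0:ℤ) - 1 < 0), mul_zero, add_zero]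
  by_cases h2 : jn ≤ m
  · have e1 : ((jn : ℤ) - 1) = ((jn - 1 : ℕ) : ℤ) := by omega
    rw [qbinom_eq (m+1) jn (by omega), qbinom_eq m jn h2, e1, qbinom_eq m (jn-1) (by omega)]
    have epow : ((m : ℤ) + 1 - jn) = ((m + 1 - jn : ℕ) : ℤ) := by omega
    rw [epow, zpow_natCast]
    have f1 : qfact Q (m + 1) = qfact Q m * qint Q (m + 1) := qfact_succ m
    have e2 : m + 1 - jn = (m - jn) + 1 := by omega
    have f2 : qfact Q (m + 1 - jn) = qfact Q (m - jn) * qint Q (m + 1 - jn) := by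
      rw [e2, qfact_succ, ← e2]
    have e3 : jn = (jn - 1) + 1 := by omega
    have f3 : qfact Q jn = qfact Q (jn - 1) * qint Q jn := by
      conv_lhs => rw [e3]
      rw [qfact_succ, ← e3]
    have e4 : m + 1 = (m + 1 - jn) + jn := by omega
    have key : qint Q (m + 1) = qint Q (m + 1 - jn) + Q ^ (m + 1 - jn) * qint Q jn := by
      conv_lhs => rw [e4]
      rw [qint_add]
    have h4 : (m + 1) - jn = m - (jn - 1) := by omega
    rw [h4] at f2 ⊢
    rw [f1, f2, f3, key, h4]
    have n1 := qfact_ne_zero m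
    have n2 := qfact_ne_zero (jn - 1)
    have n3 := qfact_ne_zero (m - jn)
    have n4 := qint_ne_zero hj1
    have n5 : qint Q (m - (jn - 1)) ≠ 0 := qint_ne_zero (by omega)
    field_simp
  · by_cases h3 : jn = m + 1
    · subst h3
      have l1 : qbinom Q (m + 1) ((m + 1 : ℕ) : ℤ) = 1 := qbinom_self (m + 1)
      push_cast at l1 ⊢
      rw [l1, qbinom_gt (by push_cast; omega), zero_add]
      have : ((m : ℤ) + 1 - 1) = (m : ℤ) := by ring
      rw [this, qbinom_self]
      simp
    · rw [qbinom_gt (by push_cast; omega), qbinom_gt (by push_cast; omega),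
        qbinom_gt (show (m : ℤ) < (jn : ℤ) - 1 by push_cast; omega), mul_zero, add_zero]


lemma qvandermonde (A P : ℕ) (c : ℤ) :
    ∑ b ∈ Finset.range (P + 1),
        Q ^ ((b : ℤ) * ((A : ℤ) - c + b)) * qbinom Q A (c - b) * qbinom Q P b
      = qbinom Q (A + P) c := by
  induction P generalizing c with
  | zero =>
    simp [qbinom_zero]
  | succ P ih =>
    have hsplit : ∀ b ∈ Finset.range (P + 2),
        Q ^ ((b : ℤ) * ((A : ℤ) - c + b)) * qbinom Q A (c - b) * qbinom Q (P + 1) (b : ℤ)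
          = Q ^ ((b : ℤ) * ((A : ℤ) - c + b)) * qbinom Q A (c - b) * qbinom Q P (b : ℤ)
            + Q ^ ((b : ℤ) * ((A : ℤ) - c + b)) * qbinom Q A (c - b) *
              (Q ^ ((P : ℤ) + 1 - b) * qbinom Q P ((b : ℤ) - 1)) := by
      intro b _
      rw [qpascal P (b : ℤ)]
      ring
    rw [Finset.sum_congr rfl hsplit, Finset.sum_add_distrib]
    have part1 : ∑ b ∈ Finset.range (P + 2),
        Q ^ ((b : ℤ) * ((A : ℤ) - c + b)) * qbinom Q A (c - b) * qbinom Q P (b : ℤ)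
          = qbinom Q (A + P) c := by
      rw [Finset.sum_range_succ,
        show qbinom Q P (((P + 1 : ℕ)) : ℤ) = 0 from qbinom_gt (by push_cast; omega),
        mul_zero, add_zero, ih c]
    have part2 : ∑ b ∈ Finset.range (P + 2),
        Q ^ ((b : ℤ) * ((A : ℤ) - c + b)) * qbinom Q A (c - b) *
          (Q ^ ((P : ℤ) + 1 - b) * qbinom Q P ((b : ℤ) - 1))
          = Q ^ ((A : ℤ) + P + 1 - c) * qbinom Q (A + P) (c - 1) := by
      rw [Finset.sum_range_succ']
      have h0 : qbinom Q P (((0 : ℕ) : ℤ) - 1) = 0 := qbinom_neg (by norm_num)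
      rw [h0]
      have hterm : ∀ s ∈ Finset.range (P + 1),
          Q ^ (((s + 1 : ℕ) : ℤ) * ((A : ℤ) - c + ((s + 1 : ℕ) : ℤ))) *
              qbinom Q A (c - ((s + 1 : ℕ) : ℤ)) *
              (Q ^ ((P : ℤ) + 1 - ((s + 1 : ℕ) : ℤ)) * qbinom Q P (((s + 1 : ℕ) : ℤ) - 1))
            = Q ^ ((A : ℤ) + P + 1 - c) *
              (Q ^ ((s : ℤ) * ((A : ℤ) - (c - 1) + s)) * qbinom Q A ((c - 1) - s) *
                qbinom Q P (s : ℤ)) := by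
        intro s _
        push_cast
        rw [show c - ((s : ℤ) + 1) = (c - 1) - s by ring,
          show ((s : ℤ) + 1) - 1 = (s : ℤ) by ring]
        have hexp : ((s : ℤ) + 1) * ((A : ℤ) - c + ((s : ℤ) + 1)) + ((P : ℤ) + 1 - ((s : ℤ) + 1))
            = ((A : ℤ) + P + 1 - c) + (s : ℤ) * ((A : ℤ) - (c - 1) + s) := by ring
        calc Q ^ (((s : ℤ) + 1) * ((A : ℤ) - c + ((s : ℤ) + 1))) * qbinom Q A ((c - 1) - s) *
              (Q ^ ((P : ℤ) + 1 - ((s : ℤ) + 1)) * qbinom Q P (s : ℤ))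
            = Q ^ (((s : ℤ) + 1) * ((A : ℤ) - c + ((s : ℤ) + 1)) + ((P : ℤ) + 1 - ((s : ℤ) + 1))) *
              (qbinom Q A ((c - 1) - s) * qbinom Q P (s : ℤ)) := by
              rw [zpow_add₀ qX_ne_zero]; ring
          _ = Q ^ (((A : ℤ) + P + 1 - c) + (s : ℤ) * ((A : ℤ) - (c - 1) + s)) *
              (qbinom Q A ((c - 1) - s) * qbinom Q P (s : ℤ)) := by rw [hexp]
          _ = _ := by rw [zpow_add₀ qX_ne_zero]; ring
      rw [Finset.sum_congr rfl hterm, ← Finset.mul_sum, ih (c - 1)]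
      simp
    rw [part1, part2, show A + (P + 1) = (A + P) + 1 from rfl, qpascal (A + P) c]
    push_cast
    ring_nf

lemma sum_range_ext (R S : ℕ) (f : ℕ → RatFunc ℚ) (hRS : R ≤ S)
    (hz : ∀ b, R ≤ b → f b = 0) :
    ∑ b ∈ Finset.range R, f b = ∑ b ∈ Finset.range S, f b :=
  Finset.sum_subset (Finset.range_subset_range.2 hRS)
    (fun b _ hnb => hz b (by simpa using hnb))

lemma merge (m n P a : ℕ) :
    ∑ b ∈ Finset.range (m + a + 1),
        Q ^ ((b : ℤ) * ((n : ℤ) - a + b)) * qbinom Q (m + n) ((m : ℤ) + a - b) *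
          (qbinom Q (n + b) (n : ℤ) * qbinom Q (n + P) ((n : ℤ) + b))
      = qbinom Q (m + n + P) ((m : ℤ) + a) * (qfact Q (n + P) / (qfact Q n * qfact Q P)) := by
  set K : RatFunc ℚ := qfact Q (n + P) / (qfact Q n * qfact Q P) with hK
  have key : ∀ b : ℕ, qbinom Q (n + b) (n : ℤ) * qbinom Q (n + P) ((n : ℤ) + b)
      = qbinom Q P (b : ℤ) * K := by
    intro b
    by_cases hb : b ≤ P
    · rw [qbinom_eq (n + b) n (by omega),
        show (n : ℤ) + b = ((n + b : ℕ) : ℤ) by push_cast; ring,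
        qbinom_eq (n + P) (n + b) (by omega), qbinom_eq P b hb,
        show n + b - n = b by omega, show n + P - (n + b) = P - b by omega, hK]
      have h1 := qfact_ne_zero n
      have h2 := qfact_ne_zero b
      have h3 := qfact_ne_zero (P - b)
      have h4 := qfact_ne_zero (n + b)
      have h5 := qfact_ne_zero (n + P)
      have h6 := qfact_ne_zero P
      field_simp
    · rw [show qbinom Q (n + P) ((n : ℤ) + b) = 0 from qbinom_gt (by push_cast; omega),
        show qbinom Q P (b : ℤ) = 0 from qbinom_gt (by push_cast; omega), mul_zero, zero_mul]
  have step1 : ∀ b ∈ Finset.range (m + a + 1),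
      Q ^ ((b : ℤ) * ((n : ℤ) - a + b)) * qbinom Q (m + n) ((m : ℤ) + a - b) *
          (qbinom Q (n + b) (n : ℤ) * qbinom Q (n + P) ((n : ℤ) + b))
        = (Q ^ ((b : ℤ) * ((n : ℤ) - a + b)) * qbinom Q (m + n) ((m : ℤ) + a - b) *
            qbinom Q P (b : ℤ)) * K := by
    intro b _
    rw [key b]
    ring
  rw [Finset.sum_congr rfl step1, ← Finset.sum_mul]
  congr 1
  set f : ℕ → RatFunc ℚ := fun b =>
    Q ^ ((b : ℤ) * ((n : ℤ) - a + b)) * qbinom Q (m + n) ((m : ℤ) + a - b) * qbinom Q P (b : ℤ)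
    with hf
  have hz1 : ∀ b, m + a + 1 ≤ b → f b = 0 := by
    intro b hb
    rw [hf]
    simp only
    rw [show qbinom Q (m + n) ((m : ℤ) + a - b) = 0 from qbinom_neg (by push_cast; omega)]
    ring
  have hz2 : ∀ b, P + 1 ≤ b → f b = 0 := by
    intro b hb
    rw [hf]
    simp only
    rw [show qbinom Q P (b : ℤ) = 0 from qbinom_gt (by push_cast; omega)]
    ring
  have hbig : ∑ b ∈ Finset.range (m + a + 1), f b = ∑ b ∈ Finset.range (P + 1), f b := by
    rw [sum_range_ext (m + a + 1) (m + a + P + 2) f (by omega) hz1,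
      sum_range_ext (P + 1) (m + a + P + 2) f (by omega) hz2]
  rw [hbig]
  have hv := qvandermonde (m + n) P ((m : ℤ) + a)
  rw [show m + n + P = (m + n) + P from rfl, ← hv]
  apply Finset.sum_congr rfl
  intro b _
  rw [hf]
  simp only
  rw [show ((b : ℤ) * ((n : ℤ) - a + b)) = ((b : ℤ) * (((m + n : ℕ) : ℤ) - ((m : ℤ) + a) + b)) by
    push_cast; ring,
    show ((m : ℤ) + a - b) = (((m : ℤ) + a) - b) by ring]

lemma finsum_mem_const_mul {α : Type*} (S : Set α) (c : RatFunc ℚ) (f : α → RatFunc ℚ) :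
    ∑ᶠ x ∈ S, c * f x = c * ∑ᶠ x ∈ S, f x := by
  rw [finsum_mem_def, finsum_mem_def, ← smul_eq_mul, smul_finsum]
  apply finsum_congr
  intro x
  by_cases h : x ∈ S <;> simp [h, Set.indicator_apply]

lemma fiber_split {α : Type*} (T : Set α) (H : α → RatFunc ℚ) (key : α → ℕ) (B : Finset ℕ)
    (hfin : (T ∩ Function.support H).Finite)
    (hkey : ∀ s ∈ T, H s ≠ 0 → key s ∈ B) :
    ∑ᶠ s ∈ T, H s = ∑ b ∈ B, ∑ᶠ s ∈ T ∩ {s | key s = b}, H s := by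
  rw [finsum_mem_eq_sum H hfin]
  have inner : ∀ b : ℕ, ∑ᶠ s ∈ T ∩ {s | key s = b}, H s
      = ∑ s ∈ hfin.toFinset.filter (fun s => key s = b), H s := by
    intro b
    have hfin' : ((T ∩ {s | key s = b}) ∩ Function.support H).Finite :=
      hfin.subset (by intro x hx; exact ⟨hx.1.1, hx.2⟩)
    rw [finsum_mem_eq_sum H hfin']
    apply Finset.sum_congr _ (fun _ _ => rfl)
    ext x
    simp only [Set.Finite.mem_toFinset, Finset.mem_filter, Set.mem_inter_iff, Set.mem_setOf_eq]
    tauto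
  rw [Finset.sum_congr rfl (fun b _ => inner b)]
  exact (Finset.sum_fiberwise_of_maps_to (fun x hx => by
    rw [Set.Finite.mem_toFinset] at hx
    exact hkey x hx.1 hx.2) H).symm

lemma bounded_finite (k B : ℕ) :
    {s : ℕ → ℕ | (∀ i, s i ≤ B) ∧ ∀ i, k + 1 ≤ i → s i = 0}.Finite := by
  set S := {s : ℕ → ℕ | (∀ i, s i ≤ B) ∧ ∀ i, k + 1 ≤ i → s i = 0}
  have : S.Finite := by
    apply Set.Finite.of_finite_image
      (f := fun (s : ℕ → ℕ) (i : Fin (k + 1)) => (⟨min (s i) B, by omega⟩ : Fin (B + 1)))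
    · exact Set.toFinite _
    · intro s hs s' hs' h
      funext i
      by_cases hi : i ≤ k
      · have := congrFun h ⟨i, by omega⟩
        simp only [Fin.mk.injEq] at this
        have h1 : min (s i) B = s i := min_eq_left (hs.1 i)
        have h2 : min (s' i) B = s' i := min_eq_left (hs'.1 i)
        omega
      · rw [hs.2 i (by omega), hs'.2 i (by omega)]
  exact this

noncomputable def termF (N t : ℕ → ℕ) (i : ℕ) : RatFunc ℚ :=
  Q ^ ((t (i + 1) : ℤ) * ((N (i + 1) : ℤ) - (t i : ℤ) + (t (i + 1) : ℤ))) *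
    qbinom Q (N i + t i) ((N i : ℤ)) *
    qbinom Q (N i + N (i + 1)) ((N i : ℤ) + (t i : ℤ) - (t (i + 1) : ℤ))

def SSet (k a : ℕ) : Set (ℕ → ℕ) :=
  {t | t 0 = a ∧ t k = 0 ∧ ∀ i, k + 1 ≤ i → t i = 0}

noncomputable def term0 (N : ℕ → ℕ) (a b : ℕ) : RatFunc ℚ :=
  Q ^ ((b : ℤ) * ((N 1 : ℤ) - (a : ℤ) + (b : ℤ))) *
    qbinom Q (N 0 + a) ((N 0 : ℤ)) *
    qbinom Q (N 0 + N 1) ((N 0 : ℤ) + (a : ℤ) - (b : ℤ))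

noncomputable def RHSf (k : ℕ) (N : ℕ → ℕ) (a : ℕ) : RatFunc ℚ :=
  qbinom Q (N 0 + a) ((N 0 : ℤ)) *
    (qbinom Q (∑ i ∈ Finset.range (k + 1), N i) ((N 0 : ℤ) + (a : ℤ)) *
      (qfact Q (∑ i ∈ Finset.range k, N (i + 1)) / ∏ i ∈ Finset.range k, qfact Q (N (i + 1))))

def prependA (a : ℕ) (s : ℕ → ℕ) : ℕ → ℕ
  | 0 => a
  | j + 1 => s j

lemma termF_prepend_zero (N : ℕ → ℕ) (a : ℕ) (s : ℕ → ℕ) :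
    termF N (prependA a s) 0 = term0 N a (s 0) := rfl

lemma termF_prepend_succ (N : ℕ → ℕ) (a : ℕ) (s : ℕ → ℕ) (i : ℕ) :
    termF N (prependA a s) (i + 1) = termF (fun j => N (j + 1)) s i := rfl

lemma main_ind : ∀ (k : ℕ) (N : ℕ → ℕ) (a : ℕ),
    (∑ᶠ t ∈ SSet k a, ∏ i ∈ Finset.range k, termF N t i) = RHSf k N a := by
  intro k
  induction k with
  | zero =>
    intro N a
    rcases Nat.eq_zero_or_pos a with rfl | ha
    · have hset : SSet 0 0 = {(fun _ => 0 : ℕ → ℕ)} := by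
        ext t
        simp only [SSet, Set.mem_setOf_eq, Set.mem_singleton_iff]
        constructor
        · rintro ⟨h0, -, h⟩
          funext i
          rcases Nat.eq_zero_or_pos i with rfl | hi
          · exact h0
          · exact h i hi
        · rintro rfl
          exact ⟨rfl, rfl, fun _ _ => rfl⟩
      rw [hset, finsum_mem_singleton]
      simp [RHSf, qfact, qbinom_self]
    · have hset : SSet 0 a = ∅ := by
        ext t
        simp only [SSet, Set.mem_setOf_eq, Set.mem_empty_iff_false, iff_false, not_and]
        intro h0 h1
        omega
      rw [hset, finsum_mem_empty, RHSf, Finset.sum_range_one,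
        show qbinom Q (N 0) ((N 0 : ℤ) + (a : ℤ)) = 0 from qbinom_gt (by omega)]
      simp
  | succ k ih =>
    intro N a
    set N' : ℕ → ℕ := fun j => N (j + 1) with hN'
    set T : Set (ℕ → ℕ) := {s | s k = 0 ∧ ∀ i, k + 1 ≤ i → s i = 0} with hT
    have himg : SSet (k + 1) a = prependA a '' T := by
      ext t
      constructor
      · rintro ⟨h0, hk, hbig⟩
        refine ⟨fun j => t (j + 1), ⟨hk, fun i hi => hbig (i + 1) (by omega)⟩, ?_⟩
        funext i
        cases i with
        | zero => exact h0.symm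
        | succ j => rfl
      · rintro ⟨s, hs, rfl⟩
        refine ⟨rfl, hs.1, fun i hi => ?_⟩
        cases i with
        | zero => omega
        | succ j => exact hs.2 j (by omega)
    have hinj : T.InjOn (prependA a) := by
      intro s _ s' _ h
      funext j
      exact congrFun h (j + 1)
    rw [himg, finsum_mem_image hinj]
    have hH : ∀ s : ℕ → ℕ,
        (∏ i ∈ Finset.range (k + 1), termF N (prependA a s) i)
          = term0 N a (s 0) * ∏ i ∈ Finset.range k, termF N' s i := by
      intro s
      rw [Finset.prod_range_succ', termF_prepend_zero, mul_comm]
      congr 1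
    rw [finsum_mem_congr rfl (fun s _ => hH s)]
    -- fiber split
    set B' : ℕ := N 0 + a + ∑ j ∈ Finset.range (k + 1), N (j + 1) with hB'
    have hkey : ∀ s ∈ T, (term0 N a (s 0) * ∏ i ∈ Finset.range k, termF N' s i) ≠ 0 →
        s 0 ∈ Finset.range (N 0 + a + 1) := by
      intro s _ hne
      rw [Finset.mem_range]
      by_contra hgt
      apply hne
      rw [term0, show qbinom Q (N 0 + N 1) ((N 0 : ℤ) + (a : ℤ) - (s 0 : ℤ)) = 0 from
        qbinom_neg (by omega)]
      ring
    have hbounds : ∀ s ∈ T, (term0 N a (s 0) * ∏ i ∈ Finset.range k, termF N' s i) ≠ 0 →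
        ∀ i, s i ≤ B' := by
      intro s hsT hne
      have h0 : s 0 ≤ N 0 + a := by
        by_contra hgt
        apply hne
        rw [term0, show qbinom Q (N 0 + N 1) ((N 0 : ℤ) + (a : ℤ) - (s 0 : ℤ)) = 0 from
          qbinom_neg (by omega)]
        ring
      have hstep : ∀ i, i < k → s (i + 1) ≤ N (i + 1) + s i := by
        intro i hik
        by_contra hgt
        apply hne
        have : termF N' s i = 0 := by
          rw [termF, show qbinom Q (N' i + N' (i + 1))
              ((N' i : ℤ) + (s i : ℤ) - (s (i + 1) : ℤ)) = 0 from
            qbinom_neg (by simp only [hN']; omega)]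
          ring
        rw [Finset.prod_eq_zero (Finset.mem_range.2 hik) this]
        ring
      have hle : ∀ i, i ≤ k → s i ≤ N 0 + a + ∑ j ∈ Finset.range i, N (j + 1) := by
        intro i
        induction i with
        | zero => intro _; simpa using h0
        | succ i ihh =>
          intro hik
          have h1 := hstep i (by omega)
          have h2 := ihh (by omega)
          rw [Finset.sum_range_succ]
          omega
      intro i
      by_cases hik : i ≤ k
      · have := hle i hik
        have hmono : (∑ j ∈ Finset.range i, N (j + 1)) ≤ ∑ j ∈ Finset.range (k + 1), N (j + 1) :=
          Finset.sum_le_sum_of_subset (Finset.range_subset_range.2 (by omega))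
        omega
      · rw [hsT.2 i (by omega)]
        omega
    have hfin : (T ∩ Function.support
        (fun s => term0 N a (s 0) * ∏ i ∈ Finset.range k, termF N' s i)).Finite := by
      apply (bounded_finite k B').subset
      rintro s ⟨hsT, hsupp⟩
      exact ⟨hbounds s hsT hsupp, hsT.2⟩
    rw [fiber_split T _ (fun s => s 0) (Finset.range (N 0 + a + 1)) hfin hkey]
    have hfib : ∀ b : ℕ, T ∩ {s : ℕ → ℕ | s 0 = b} = SSet k b := by
      intro b
      ext s
      simp only [hT, SSet, Set.mem_inter_iff, Set.mem_setOf_eq]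
      tauto
    have hinner : ∀ b ∈ Finset.range (N 0 + a + 1),
        (∑ᶠ s ∈ T ∩ {s : ℕ → ℕ | (fun s => s 0) s = b},
          term0 N a (s 0) * ∏ i ∈ Finset.range k, termF N' s i)
          = term0 N a b * RHSf k N' b := by
      intro b _
      rw [hfib b]
      rw [finsum_mem_congr rfl (fun s hs => by rw [(hs.1 : s 0 = b)])]
      rw [finsum_mem_const_mul, ih N' b]
    rw [Finset.sum_congr rfl hinner]
    -- now the algebraic identity
    set P' : ℕ := ∑ i ∈ Finset.range k, N (i + 1 + 1) with hP'
    set D' : RatFunc ℚ := ∏ i ∈ Finset.range k, qfact Q (N (i + 1 + 1)) with hD'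
    have hD'ne : D' ≠ 0 := Finset.prod_ne_zero_iff.2 fun i _ => qfact_ne_zero _
    have hsum1 : (∑ i ∈ Finset.range (k + 1), N' i) = P' + N 1 := by
      rw [hN', Finset.sum_range_succ']
    have hterm : ∀ b ∈ Finset.range (N 0 + a + 1),
        term0 N a b * RHSf k N' b
          = (Q ^ ((b : ℤ) * ((N 1 : ℤ) - (a : ℤ) + (b : ℤ))) *
              qbinom Q (N 0 + N 1) ((N 0 : ℤ) + (a : ℤ) - (b : ℤ)) *
              (qbinom Q (N 1 + b) ((N 1 : ℤ)) * qbinom Q (N 1 + P') ((N 1 : ℤ) + (b : ℤ)))) *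
            (qbinom Q (N 0 + a) ((N 0 : ℤ)) * (qfact Q P' / D')) := by
      intro b _
      rw [term0, RHSf, hsum1, show P' + N 1 = N 1 + P' by omega,
        show N' 0 = N 1 from rfl,
        show (∑ x ∈ Finset.range k, N' (x + 1)) = P' from rfl,
        show (∏ x ∈ Finset.range k, qfact Q (N' (x + 1))) = D' from rfl]
      ring
    rw [Finset.sum_congr rfl hterm, ← Finset.sum_mul, merge (N 0) (N 1) P' a]
    -- final assembly
    rw [RHSf]
    have hs2 : (∑ i ∈ Finset.range (k + 1 + 1), N i) = N 0 + N 1 + P' := by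
      rw [Finset.sum_range_succ' N (k + 1), Finset.sum_range_succ' (fun i => N (i + 1)) k, hP']
      ring
    have hs3 : (∑ i ∈ Finset.range (k + 1), N (i + 1)) = N 1 + P' := by
      rw [Finset.sum_range_succ' (fun i => N (i + 1)) k, hP']
      ring
    have hs4 : (∏ i ∈ Finset.range (k + 1), qfact Q (N (i + 1))) = D' * qfact Q (N 1) := by
      rw [Finset.prod_range_succ' (fun i => qfact Q (N (i + 1))) k, hD']
    rw [hs2, hs3, hs4]
    have n1 := qfact_ne_zero (N 1)
    have n2 := qfact_ne_zero P'
    have n3 := qfact_ne_zero (N 1 + P')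
    field_simp

/-- **q-multinomial identity.** For `k ≥ 1` and nonnegative integers
`n1, …, nk`,
`Σ_{t1,…,tk ≥ 0, t1 = tk = 0} Π_{i=1}^{k-1}
    q^{t_{i+1}(n_{i+1} - t_i + t_{i+1})} [n_i + t_i choose n_i]_q
      [n_i + n_{i+1} choose n_i + t_i - t_{i+1}]_q
  = [n1 + ⋯ + nk choose n1, …, nk]_q`,
stated in the field of rational functions in `q = RatFunc.X`. -/
theorem q_multinomial_identity (k : ℕ) (hk : 1 ≤ k) (N : ℕ → ℕ) :
    ∑ᶠ t ∈ {t : ℕ → ℕ | t 0 = 0 ∧ t (k - 1) = 0 ∧ ∀ i, k ≤ i → t i = 0},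
        ∏ i ∈ Finset.range (k - 1),
          (RatFunc.X : RatFunc ℚ) ^
              ((t (i + 1) : ℤ) * ((N (i + 1) : ℤ) - (t i : ℤ) + (t (i + 1) : ℤ))) *
            qbinom (RatFunc.X : RatFunc ℚ) (N i + t i) ((N i : ℤ)) *
            qbinom (RatFunc.X : RatFunc ℚ) (N i + N (i + 1))
              ((N i : ℤ) + (t i : ℤ) - (t (i + 1) : ℤ))
      = qfact (RatFunc.X : RatFunc ℚ) (∑ i ∈ Finset.range k, N i) /
          ∏ i ∈ Finset.range k, qfact (RatFunc.X : RatFunc ℚ) (N i) := by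
  obtain ⟨κ, rfl⟩ : ∃ κ, k = κ + 1 := ⟨k - 1, by omega⟩
  rw [show κ + 1 - 1 = κ from rfl]
  have hconv : (∑ᶠ t ∈ {t : ℕ → ℕ | t 0 = 0 ∧ t κ = 0 ∧ ∀ i, κ + 1 ≤ i → t i = 0},
      ∏ i ∈ Finset.range κ,
        (RatFunc.X : RatFunc ℚ) ^
            ((t (i + 1) : ℤ) * ((N (i + 1) : ℤ) - (t i : ℤ) + (t (i + 1) : ℤ))) *
          qbinom (RatFunc.X : RatFunc ℚ) (N i + t i) ((N i : ℤ)) *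
          qbinom (RatFunc.X : RatFunc ℚ) (N i + N (i + 1))
            ((N i : ℤ) + (t i : ℤ) - (t (i + 1) : ℤ)))
      = ∑ᶠ t ∈ SSet κ 0, ∏ i ∈ Finset.range κ, termF N t i := rfl
  rw [hconv, main_ind κ N 0, RHSf]
  rw [show N 0 + 0 = N 0 from rfl, qbinom_self,
    show ((N 0 : ℤ) + ((0 : ℕ) : ℤ)) = ((N 0 : ℕ) : ℤ) by simp]
  have hle : N 0 ≤ ∑ i ∈ Finset.range (κ + 1), N i := by
    rw [Finset.sum_range_succ' N κ]
    omega
  rw [qbinom_eq _ (N 0) hle]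
  have hsub : (∑ i ∈ Finset.range (κ + 1), N i) - N 0 = ∑ i ∈ Finset.range κ, N (i + 1) := by
    rw [Finset.sum_range_succ' N κ]
    omega
  rw [hsub, Finset.prod_range_succ' (fun i => qfact Q (N i)) κ]
  have n1 := qfact_ne_zero (N 0)
  have n2 := qfact_ne_zero (∑ i ∈ Finset.range κ, N (i + 1))
  have n3 : (∏ i ∈ Finset.range κ, qfact Q (N (i + 1))) ≠ 0 :=
    Finset.prod_ne_zero_iff.2 fun i _ => qfact_ne_zero _
  field_simp


end DyckTilings
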